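/- The deref notion of reduction preserves de Bruijn closedness of the redex seen as a subterm at depth d: if (λ.E[n]) V is closed at depth d and Δ(E) = n, then (λ.E[↑(V, n+1, 0)]) V is closed at depth d. -/

import Mathlib

inductive Tm : Type
  | var : Nat → Tm
  | lam : Tm → Tm
  | app : Tm → Tm → Tm
deriving DecidableEq

/-- shift ↑(M, x, m): increment all indices ≥ m by x -/
def shift : Tm → Nat → Nat → Tm
  | .var n, x, m => if n ≥ m then .var (n + x) else .var n
  | .lam M, x, m => .lam (shift M x (m+1))
  | .app M N, x, m => .app (shift M x m) (shift N x m)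

/-- apply a renaming environment R to a term: (R)n = n + R(n) -/
def ren : List Nat → Tm → Tm
  | R, .var n => .var (n + R.getD n 0)
  | R, .lam M => .lam (ren (0 :: R) M)
  | R, .app M N => .app (ren R M) (ren R N)

/-- values are lambda abstractions -/
def IsVal (M : Tm) : Prop := ∃ M', M = Tm.lam M'

/-- Evaluation contexts E ::= [] | E M | (λ.E) M | (λ.E'[n]) E with n = Δ(E') -/
inductive ECtx : Type
  | hole : ECtx
  | appL : ECtx → Tm → ECtx
  | bind : ECtx → Tm → ECtx
  | opC  : ECtx → ECtx → ECtx

/-- Δ : E → ℕ -/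
def delta : ECtx → Nat
  | .hole => 0
  | .appL E _ => delta E
  | .bind E _ => delta E + 1
  | .opC _ E => delta E

/-- plugging E[M]; in the opC case the bound variable is Δ(E') -/
def plugE : ECtx → Tm → Tm
  | .hole, M => M
  | .appL E N, M => .app (plugE E M) N
  | .bind E N, M => .app (.lam (plugE E M)) N
  | .opC E' E, M => .app (.lam (plugE E' (.var (delta E')))) (plugE E M)

/-- closed at depth d -/
def ClosedAt : Tm → Nat → Prop
  | .var n, d => n < d
  | .lam M, d => ClosedAt M (d+1)
  | .app M N, d => ClosedAt M d ∧ ClosedAt N d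


lemma closed_shift : ∀ (V : Tm) (d x m : Nat), ClosedAt V d → ClosedAt (shift V x m) (d + x) := by
  intro V
  induction V with
  | var n => intro d x m h; simp [ClosedAt] at h; simp [shift]; split <;> simp [ClosedAt] <;> omega
  | lam M ih => intro d x m h; simpa [shift, ClosedAt, Nat.add_right_comm] using ih (d+1) x (m+1) h
  | app M N ihM ihN => intro d x m h; exact ⟨ihM d x m h.1, ihN d x m h.2⟩

lemma plug_replace : ∀ (E : ECtx) (M N : Tm) (d : Nat),
    ClosedAt (plugE E M) d → ClosedAt N (d + delta E) → ClosedAt (plugE E N) d := by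
  intro E
  induction E with
  | hole => intro M N d _ hN; simpa [plugE, delta] using hN
  | appL E T ih => intro M N d h hN; exact ⟨ih M N d h.1 hN, h.2⟩
  | bind E T ih =>
      intro M N d h hN
      exact ⟨ih M N (d+1) h.1 (by simpa [delta, Nat.add_right_comm, ← Nat.add_assoc] using hN), h.2⟩
  | opC E' E ih' ih => intro M N d h hN; exact ⟨h.1, ih M N d h.2 hN⟩

theorem deref_preserves_closedAt :
    ∀ (E : ECtx) (n d : Nat) (V : Tm), IsVal V → delta E = n →
      ClosedAt (.app (.lam (plugE E (.var n))) V) d →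
      ClosedAt (.app (.lam (plugE E (shift V (n+1) 0))) V) d := by
  intro E n d V _ hΔ h
  refine ⟨plug_replace E _ _ (d+1) h.1 ?_, h.2⟩
  have := closed_shift V d (n+1) 0 h.2
  rw [hΔ]; convert this using 1; omega
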